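/- For all sufficiently large even n, the following holds: for every A ⊆ {0,1}^n with |A| ≥ 2^{(99/100)n}, if x is chosen uniformly at random among the strings in {0,1}^n of Hamming weight exactly n/2, then Pr_x[∃ a ∈ A with d_H(a,x) ≤ n/8] ≥ 1 − 2^{−n/100}. -/

import Mathlib

/-- The Hamming weight of a Boolean string: the number of coordinates equal to `true`. -/
def hWt {n : ℕ} (x : Fin n → Bool) : ℕ := (Finset.univ.filter fun i => x i = true).card

open Finset Real

lemma myTwoPoint (t a b : ℝ) (h : |a - b| ≤ 1) :
    exp (t*a) + exp (t*b) ≤ 2 * exp (t*(a+b)/2 + t^2/8) := by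
  have h1 : exp (t*a) + exp (t*b)
      = 2 * exp (t*(a+b)/2) * Real.cosh (t*(a-b)/2) := by
    rw [Real.cosh_eq]
    have e1 : t*(a+b)/2 + t*(a-b)/2 = t*a := by ring
    have e2 : t*(a+b)/2 + -(t*(a-b)/2) = t*b := by ring
    rw [← e1, ← e2, Real.exp_add, Real.exp_add]
    ring
  have h2 : Real.cosh (t*(a-b)/2) ≤ exp (t^2/8) := by
    refine (Real.cosh_le_exp_half_sq _).trans (Real.exp_le_exp.2 ?_)
    have : (a-b)^2 ≤ 1 := by
      have := abs_nonneg (a-b)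
      nlinarith [sq_abs (a-b)]
    nlinarith [sq_nonneg t]
  calc exp (t*a) + exp (t*b) = 2 * exp (t*(a+b)/2) * Real.cosh (t*(a-b)/2) := h1
    _ ≤ 2 * exp (t*(a+b)/2) * exp (t^2/8) := by
        have := Real.exp_pos (t*(a+b)/2); nlinarith
    _ = 2 * exp (t*(a+b)/2 + t^2/8) := by rw [mul_assoc, ← Real.exp_add]

lemma myMgf : ∀ (n : ℕ) (F : (Fin n → Bool) → ℝ),
    (∀ x i, |F x - F (Function.update x i (!x i))| ≤ 1) → ∀ t : ℝ,
    ∑ x, exp (t * F x) ≤ 2^n * exp (t * ((∑ x, F x)/2^n) + t^2 * n/8) := by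
  intro n
  induction n with
  | zero =>
    intro F _ t
    simp [Fintype.sum_unique]
  | succ n ih =>
    intro F hL t
    have split : ∀ f : (Fin (n+1) → Bool) → ℝ, ∑ x, f x =
        (∑ x : Fin n → Bool, f (Fin.cons false x)) + ∑ x : Fin n → Bool, f (Fin.cons true x) := by
      intro f
      rw [← (Fin.consEquiv fun _ => Bool).sum_comp f]
      rw [Fintype.sum_prod_type, Fintype.sum_bool]
      exact add_comm _ _
    set G : Bool → (Fin n → Bool) → ℝ := fun b x => F (Fin.cons b x) with hG
    have hGL : ∀ b x i, |G b x - G b (Function.update x i (!x i))| ≤ 1 := by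
      intro b x i
      simpa [hG, ← Fin.cons_update, Fin.cons_succ] using hL (Fin.cons b x) i.succ
    have hIH0 := ih (G false) (hGL false) t
    have hIH1 := ih (G true) (hGL true) t
    set m0 : ℝ := (∑ x, G false x)/2^n with hm0
    set m1 : ℝ := (∑ x, G true x)/2^n with hm1
    have hm : |m0 - m1| ≤ 1 := by
      have hpt : ∀ x : Fin n → Bool, |G false x - G true x| ≤ 1 := by
        intro x
        simpa [hG, Fin.update_cons_zero] using hL (Fin.cons false x) 0
      have habs : |∑ x : Fin n → Bool, (G false x - G true x)| ≤ 2^n := by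
        refine (Finset.abs_sum_le_sum_abs _ _).trans ?_
        calc ∑ x : Fin n → Bool, |G false x - G true x| ≤ ∑ _x : Fin n → Bool, (1:ℝ) :=
              Finset.sum_le_sum fun x _ => hpt x
          _ = 2^n := by simp [Finset.card_univ]
      have hsub : m0 - m1 = (∑ x : Fin n → Bool, (G false x - G true x))/2^n := by
        rw [hm0, hm1, Finset.sum_sub_distrib]; ring
      rw [hsub, abs_div, abs_of_pos (by positivity : (0:ℝ) < (2:ℝ)^n),
        div_le_one (by positivity)]
      exact habs
    have h2p := myTwoPoint t m0 m1 hm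
    have havg : (∑ x, F x)/2^(n+1) = (m0 + m1)/2 := by
      rw [split F, hm0, hm1, ← add_div, div_div, pow_succ]
    have hexp : exp (t^2*(n:ℝ)/8) * exp (t*(m0+m1)/2 + t^2/8)
        = exp (t * ((m0+m1)/2) + t^2*((n:ℝ)+1)/8) := by
      rw [← Real.exp_add]; ring_nf
    rw [split (fun x => exp (t * F x))]
    push_cast
    calc (∑ x : Fin n → Bool, exp (t * F (Fin.cons false x)))
          + ∑ x : Fin n → Bool, exp (t * F (Fin.cons true x))
        ≤ 2^n * exp (t * m0 + t^2 * n/8) + 2^n * exp (t * m1 + t^2 * n/8) :=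
          add_le_add hIH0 hIH1
      _ = 2^n * exp (t^2*(n:ℝ)/8) * (exp (t*m0) + exp (t*m1)) := by
          rw [show t * m0 + t^2 * (n:ℝ)/8 = t*m0 + t^2*(n:ℝ)/8 from by ring,
            show t * m1 + t^2 * (n:ℝ)/8 = t*m1 + t^2*(n:ℝ)/8 from by ring,
            Real.exp_add, Real.exp_add]
          ring
      _ ≤ 2^n * exp (t^2*(n:ℝ)/8) * (2 * exp (t*(m0+m1)/2 + t^2/8)) := by
          have hpos : (0:ℝ) < 2^n * exp (t^2*(n:ℝ)/8) := by positivity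
          exact mul_le_mul_of_nonneg_left h2p (le_of_lt hpos)
      _ = 2^(n+1) * exp (t * ((∑ x, F x)/2^(n+1)) + t^2 * ((n:ℝ)+1)/8) := by
          rw [havg, ← hexp, pow_succ]
          ring

lemma myChernoff (n : ℕ) (F : (Fin n → Bool) → ℝ) (t c : ℝ) (S : Finset (Fin n → Bool))
    (hS : ∀ x ∈ S, c ≤ t * F x) :
    (S.card : ℝ) * exp c ≤ ∑ x, exp (t * F x) := by
  calc (S.card : ℝ) * exp c = ∑ _x ∈ S, exp c := by rw [Finset.sum_const, nsmul_eq_mul]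
    _ ≤ ∑ x ∈ S, exp (t * F x) := Finset.sum_le_sum fun x hx => Real.exp_le_exp.2 (hS x hx)
    _ ≤ ∑ x, exp (t * F x) :=
        Finset.sum_le_sum_of_subset_of_nonneg (Finset.subset_univ S)
          (fun x _ _ => (Real.exp_pos _).le)

section tails
variable {n : ℕ} (F : (Fin n → Bool) → ℝ)

lemma myTailGen (hn : 0 < n)
    (hL : ∀ x i, |F x - F (Function.update x i (!x i))| ≤ 1) (t s : ℝ)
    (hts : t * s ≥ 0) (S : Finset (Fin n → Bool))
    (hS : ∀ x ∈ S, t * ((∑ x, F x)/2^n + s) ≤ t * F x) :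
    (S.card : ℝ) ≤ 2^n * exp (t^2 * n/8 - t*s) := by
  set m : ℝ := (∑ x, F x)/2^n with hm
  have h1 := myChernoff n F t (t*(m+s)) S hS
  have h2 := myMgf n F hL t
  have hE : (0:ℝ) < exp (t*(m+s)) := Real.exp_pos _
  have key : (S.card : ℝ) * exp (t*(m+s)) ≤ 2^n * exp (t * m + t^2 * n/8) := h1.trans h2
  have : (S.card : ℝ) ≤ 2^n * exp (t * m + t^2 * n/8) / exp (t*(m+s)) := by
    rw [le_div_iff₀ hE]; exact key
  refine this.trans (le_of_eq ?_)
  rw [div_eq_mul_inv, ← Real.exp_neg, mul_assoc, ← Real.exp_add]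
  ring_nf

lemma card_slice (n k : ℕ) :
    Nat.card {x : Fin n → Bool // hWt x = k} = n.choose k := by
  have e : {x : Fin n → Bool // hWt x = k} ≃ {s : Finset (Fin n) // s.card = k} :=
    { toFun := fun x => ⟨Finset.univ.filter fun i => x.1 i = true, x.2⟩
      invFun := fun s => ⟨fun i => decide (i ∈ s.1), by
        have : (Finset.univ.filter fun i => decide (i ∈ s.1) = true) = s.1 := by
          ext i; simp
        simpa [hWt, this] using s.2⟩
      left_inv := by
        rintro ⟨x, hx⟩
        ext i
        simp
      right_inv := by
        rintro ⟨s, hs⟩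
        ext i
        simp }
  rw [Nat.card_congr e, Nat.card_eq_fintype_card, Fintype.card_finset_len, Fintype.card_fin]

lemma central_binom_lb (n : ℕ) : 2^n ≤ (n+1) * n.choose (n/2) := by
  calc 2^n = ∑ m ∈ Finset.range (n+1), n.choose m := (Nat.sum_range_choose n).symm
    _ ≤ ∑ _m ∈ Finset.range (n+1), n.choose (n/2) :=
        Finset.sum_le_sum fun m _ => Nat.choose_le_middle m n
    _ = (n+1) * n.choose (n/2) := by simp [Finset.sum_const, Finset.card_range, Nat.smul_one_eq_cast]
end tails

set_option maxHeartbeats 1600000 in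
/-- for all sufficiently large even `n` and every `A ⊆ {0,1}^n` with
`|A| ≥ 2^{(99/100)n}`, a uniformly random string `x` of Hamming weight exactly `n/2`
satisfies `∃ a ∈ A, d_H(a,x) ≤ n/8` with probability at least `1 − 2^{−n/100}`. -/
theorem random_half_weight_string_hits_large_set :
    ∃ N : ℕ, ∀ n ≥ N, Even n → ∀ A : Set (Fin n → Bool),
      (2:ℝ) ^ ((99/100 : ℝ) * n) ≤ (Nat.card A : ℝ) →
      (1 - (2:ℝ) ^ (-(n:ℝ)/100)) * (Nat.card {x : Fin n → Bool // hWt x = n/2} : ℝ) ≤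
        (Nat.card {x : Fin n → Bool //
          hWt x = n/2 ∧ ∃ a ∈ A, (hammingDist a x : ℝ) ≤ (n:ℝ)/8} : ℝ) := by
  classical
  use 10^7
  intro n hn _hneven A hA
  have hn0 : 0 < n := lt_of_lt_of_le (by norm_num) hn
  have hnR : (10000000 : ℝ) ≤ (n : ℝ) := by exact_mod_cast hn
  have hnR0 : (0:ℝ) < (n:ℝ) := by positivity
  obtain ⟨As, hAs⟩ : ∃ As : Finset (Fin n → Bool), As = A.toFinset := ⟨_, rfl⟩
  have hAcard : (Nat.card A : ℝ) = (As.card : ℝ) := by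
    rw [Nat.card_eq_fintype_card, hAs, Set.toFinset_card]
  have hAne : As.Nonempty := by
    rw [← Finset.card_pos]
    by_contra h
    push_neg at h
    have h0 : (As.card : ℝ) = 0 := by
      norm_cast; omega
    have := hA
    rw [hAcard, h0] at this
    exact absurd this (not_le.2 (Real.rpow_pos_of_pos (by norm_num) _))
  -- the distance-to-A function
  have hmem : ∀ x : Fin n → Bool, (As.image fun a => hammingDist a x).Nonempty :=
    fun x => hAne.image _
  obtain ⟨D, hD⟩ : ∃ D : (Fin n → Bool) → ℕ,
      D = fun x => (As.image fun a => hammingDist a x).min' (hmem x) := ⟨_, rfl⟩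
  obtain ⟨F, hF⟩ : ∃ F : (Fin n → Bool) → ℝ, F = fun x => (D x : ℝ) := ⟨_, rfl⟩
  have hDle : ∀ x, ∀ a ∈ As, D x ≤ hammingDist a x := by
    intro x a ha
    rw [hD]
    exact Finset.min'_le _ _ (Finset.mem_image_of_mem _ ha)
  have hDex : ∀ x, ∃ a ∈ As, D x = hammingDist a x := by
    intro x
    have h := Finset.min'_mem _ (hmem x)
    rw [Finset.mem_image] at h
    rw [hD]
    obtain ⟨a, ha, h⟩ := h
    exact ⟨a, ha, h.symm⟩
  have hflip : ∀ (x : Fin n → Bool) (i : Fin n) (b : Bool),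
      hammingDist x (Function.update x i b) ≤ 1 := by
    intro x i b
    have hsub : (Finset.univ.filter fun j => x j ≠ Function.update x i b j) ⊆ {i} := by
      intro j hj
      simp only [Finset.mem_filter] at hj
      rw [Finset.mem_singleton]
      by_contra hji
      exact hj.2 (by rw [Function.update_of_ne hji])
    calc hammingDist x (Function.update x i b)
        ≤ ({i} : Finset (Fin n)).card := Finset.card_le_card hsub
      _ = 1 := Finset.card_singleton i
  have hLipN : ∀ x y, D x ≤ D y + hammingDist y x := by
    intro x y
    obtain ⟨a, ha, he⟩ := hDex y
    calc D x ≤ hammingDist a x := hDle x a ha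
      _ ≤ hammingDist a y + hammingDist y x := hammingDist_triangle a y x
      _ = D y + hammingDist y x := by rw [he]
  have hLip : ∀ x i, |F x - F (Function.update x i (!x i))| ≤ 1 := by
    intro x i
    set y := Function.update x i (!x i) with hy
    have hd1 : hammingDist y x ≤ 1 := by rw [hammingDist_comm]; exact hflip x i _
    have hd2 : hammingDist x y ≤ 1 := hflip x i _
    have h1 : D x ≤ D y + 1 := (hLipN x y).trans (by omega)
    have h2 : D y ≤ D x + 1 := (hLipN y x).trans (by omega)
    rw [abs_le]
    constructor
    · simp only [hF]; push_cast; have : (D y : ℝ) ≤ (D x : ℝ) + 1 := by exact_mod_cast h2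
      linarith
    · simp only [hF]; push_cast; have : (D x : ℝ) ≤ (D y : ℝ) + 1 := by exact_mod_cast h1
      linarith
  obtain ⟨m, hm⟩ : ∃ m : ℝ, m = (∑ x, F x)/2^n := ⟨_, rfl⟩
  have hm0 : 0 ≤ m := by
    rw [hm]
    apply div_nonneg _ (by positivity)
    exact Finset.sum_nonneg fun x _ => by simp only [hF]; positivity
  -- lower tail: |A| ≤ 2^n exp(-2 m^2 / n)
  have hAbound : (As.card : ℝ) ≤ 2^n * exp (-(2*m^2/n)) := by
    have htail := myTailGen F hn0 hLip (-(4*m/n)) (-m) (by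
      rw [neg_mul_neg]
      have h4 : (0:ℝ) ≤ 4*m/n := by positivity
      exact mul_nonneg h4 hm0) As (by
        intro a ha
        have hFa : F a = 0 := by
          simp only [hF]
          norm_cast
          have h1 := hDle a a ha
          rw [hammingDist_self] at h1
          omega
        rw [hFa, mul_zero, ← hm, add_neg_cancel, mul_zero])
    refine htail.trans (le_of_eq ?_)
    congr 1
    have hne : (n:ℝ) ≠ 0 := ne_of_gt hnR0
    field_simp
    ring
  -- deduce m ≤ 0.0589 n
  have hmle : m ≤ (589/10000) * n := by
    have hstep : (2:ℝ)^((99/100:ℝ)*n) * exp (2*m^2/n) ≤ (2:ℝ)^((n:ℝ)) := by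
      have h1 : (2:ℝ)^((99/100:ℝ)*n) ≤ 2^n * exp (-(2*m^2/n)) :=
        (hA.trans (le_of_eq hAcard)).trans hAbound
      have h2 := mul_le_mul_of_nonneg_right h1 (Real.exp_pos (2*m^2/n)).le
      rw [mul_assoc, ← Real.exp_add, neg_add_cancel, Real.exp_zero, mul_one] at h2
      rw [← Real.rpow_natCast 2 n] at h2
      exact h2
    have hX : exp (2*m^2/n) ≤ (2:ℝ)^((1/100:ℝ)*n) := by
      have hpow : (0:ℝ) < (2:ℝ)^((99/100:ℝ)*n) := Real.rpow_pos_of_pos (by norm_num) _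
      rw [← le_div_iff₀' hpow] at hstep
      refine hstep.trans (le_of_eq ?_)
      rw [← Real.rpow_sub (by norm_num)]
      congr 1
      ring
    have hlog : 2*m^2/n ≤ Real.log 2 * ((1/100)*n) := by
      have : (2:ℝ)^((1/100:ℝ)*n) = exp (Real.log 2 * ((1/100)*n)) := by
        rw [Real.rpow_def_of_pos (by norm_num)]
      rw [this] at hX
      exact Real.exp_le_exp.mp hX
    have hlog2 : Real.log 2 < 0.6931471808 := Real.log_two_lt_d9
    have hm2 : m^2 ≤ (0.6931471808/200) * n^2 := by
      rw [div_le_iff₀ hnR0] at hlog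
      nlinarith
    nlinarith [sq_nonneg (m - (589/10000)*n)]
  -- upper tail
  obtain ⟨s2, hs2⟩ : ∃ s2 : ℝ, s2 = (n:ℝ)/8 - m := ⟨_, rfl⟩
  have hs2lb : (33/500)*(n:ℝ) ≤ s2 := by rw [hs2]; nlinarith
  have hs2nn : 0 ≤ s2 := le_trans (by nlinarith) hs2lb
  obtain ⟨Bd, hBd⟩ : ∃ Bd : Finset (Fin n → Bool),
      Bd = Finset.univ.filter (fun x => ¬ ∃ a ∈ A, (hammingDist a x : ℝ) ≤ (n:ℝ)/8) :=
    ⟨_, rfl⟩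
  have hBdbound : (Bd.card : ℝ) ≤ 2^n * exp (-(2*s2^2/n)) := by
    have htail := myTailGen F hn0 hLip (4*s2/n) s2 (by positivity) Bd (by
      intro x hx
      rw [hBd, Finset.mem_filter] at hx
      obtain ⟨a, ha, he⟩ := hDex x
      have haA : a ∈ A := by rw [hAs, Set.mem_toFinset] at ha; exact ha
      have hgt : ¬ ((hammingDist a x : ℝ) ≤ (n:ℝ)/8) := fun hc => hx.2 ⟨a, haA, hc⟩
      push_neg at hgt
      have hFx : (n:ℝ)/8 ≤ F x := by
        rw [hF]
        simp only
        rw [he]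
        exact hgt.le
      have hthresh : (∑ x, F x)/2^n + s2 ≤ F x := by
        rw [← hm, hs2]
        linarith
      exact mul_le_mul_of_nonneg_left hthresh (by positivity))
    refine htail.trans (le_of_eq ?_)
    congr 1
    have hne : (n:ℝ) ≠ 0 := ne_of_gt hnR0
    field_simp
    ring
  have hBdexp : (Bd.card : ℝ) ≤ 2^n * exp (-(2178/250000)*n) := by
    refine hBdbound.trans ?_
    have hmono : -(2*s2^2/n) ≤ -(2178/250000)*(n:ℝ) := by
      have h1 : (2178/250000)*(n:ℝ) ≤ 2*s2^2/n := by
        rw [le_div_iff₀ hnR0]; nlinarith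
      linarith
    have := Real.exp_le_exp.2 hmono
    nlinarith [pow_pos (show (0:ℝ) < 2 by norm_num) n]
  -- counting
  have hSliceLb : (2:ℝ)^n / ((n:ℝ)+1) ≤ (Nat.card {x : Fin n → Bool // hWt x = n/2} : ℝ) := by
    rw [card_slice n (n/2), div_le_iff₀ (by positivity)]
    exact_mod_cast (central_binom_lb n).trans (le_of_eq (Nat.mul_comm _ _))
  have hdecomp : Nat.card {x : Fin n → Bool // hWt x = n/2} =
      Nat.card {x : Fin n → Bool //
          hWt x = n/2 ∧ ∃ a ∈ A, (hammingDist a x : ℝ) ≤ (n:ℝ)/8}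
        + (Finset.univ.filter fun x : Fin n → Bool =>
            hWt x = n/2 ∧ ¬ ∃ a ∈ A, (hammingDist a x : ℝ) ≤ (n:ℝ)/8).card := by
    rw [Nat.card_eq_fintype_card, Nat.card_eq_fintype_card,
      Fintype.card_subtype, Fintype.card_subtype]
    rw [← Finset.filter_filter, ← Finset.filter_filter,
      Finset.card_filter_add_card_filter_not]
  have hbadsub : (Finset.univ.filter fun x : Fin n → Bool =>
            hWt x = n/2 ∧ ¬ ∃ a ∈ A, (hammingDist a x : ℝ) ≤ (n:ℝ)/8) ⊆ Bd := by
    rw [hBd]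
    intro x hx
    rw [Finset.mem_filter] at hx ⊢
    exact ⟨hx.1, hx.2.2⟩
  -- numeric endgame
  have heps : (2:ℝ)^(-(n:ℝ)/100) = exp (Real.log 2 * (-(n:ℝ)/100)) :=
    Real.rpow_def_of_pos (by norm_num) _
  have h17 : ((n:ℝ)+1) ≤ exp ((17/10000)*n) := by
    have hu := Real.add_one_le_exp ((17/20000)*(n:ℝ))
    have hsq : exp ((17/10000)*(n:ℝ)) = exp ((17/20000)*(n:ℝ)) * exp ((17/20000)*(n:ℝ)) := by
      rw [← Real.exp_add]; ring_nf
    nlinarith [Real.exp_pos ((17/20000)*(n:ℝ))]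
  have hkey : ((n:ℝ)+1) * exp (-(2178/250000)*n) ≤ exp (Real.log 2 * (-(n:ℝ)/100)) := by
    have hstep : (17/10000)*(n:ℝ) + (-(2178/250000)*n) ≤ Real.log 2 * (-(n:ℝ)/100) := by
      nlinarith [Real.log_two_lt_d9, Real.log_two_gt_d9]
    calc ((n:ℝ)+1) * exp (-(2178/250000)*n)
        ≤ exp ((17/10000)*n) * exp (-(2178/250000)*n) :=
          mul_le_mul_of_nonneg_right h17 (Real.exp_pos _).le
      _ = exp ((17/10000)*(n:ℝ) + (-(2178/250000)*n)) := (Real.exp_add _ _).symm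
      _ ≤ exp (Real.log 2 * (-(n:ℝ)/100)) := Real.exp_le_exp.2 hstep
  have hfinal : (2:ℝ)^n * exp (-(2178/250000)*n)
      ≤ (2:ℝ)^(-(n:ℝ)/100) * ((2:ℝ)^n / ((n:ℝ)+1)) := by
    rw [heps]
    have hp1 : (0:ℝ) < (n:ℝ)+1 := by positivity
    have h2n : (0:ℝ) < (2:ℝ)^n := by positivity
    rw [mul_div_assoc', le_div_iff₀ hp1]
    have hmul := mul_le_mul_of_nonneg_left hkey h2n.le
    nlinarith
  have hSR : (Nat.card {x : Fin n → Bool // hWt x = n/2} : ℝ)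
      = (Nat.card {x : Fin n → Bool //
          hWt x = n/2 ∧ ∃ a ∈ A, (hammingDist a x : ℝ) ≤ (n:ℝ)/8} : ℝ)
      + ((Finset.univ.filter fun x : Fin n → Bool =>
            hWt x = n/2 ∧ ¬ ∃ a ∈ A, (hammingDist a x : ℝ) ≤ (n:ℝ)/8).card : ℝ) := by
    exact_mod_cast congrArg (Nat.cast : ℕ → ℝ) hdecomp
  have hBR : ((Finset.univ.filter fun x : Fin n → Bool =>
            hWt x = n/2 ∧ ¬ ∃ a ∈ A, (hammingDist a x : ℝ) ≤ (n:ℝ)/8).card : ℝ)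
      ≤ (2:ℝ)^(-(n:ℝ)/100) * (Nat.card {x : Fin n → Bool // hWt x = n/2} : ℝ) := by
    have hrnn : (0:ℝ) ≤ (2:ℝ)^(-(n:ℝ)/100) := (Real.rpow_pos_of_pos (by norm_num) _).le
    calc ((Finset.univ.filter fun x : Fin n → Bool =>
            hWt x = n/2 ∧ ¬ ∃ a ∈ A, (hammingDist a x : ℝ) ≤ (n:ℝ)/8).card : ℝ)
        ≤ (Bd.card : ℝ) := by exact_mod_cast Finset.card_le_card hbadsub
      _ ≤ 2^n * exp (-(2178/250000)*n) := hBdexp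
      _ ≤ (2:ℝ)^(-(n:ℝ)/100) * ((2:ℝ)^n / ((n:ℝ)+1)) := hfinal
      _ ≤ (2:ℝ)^(-(n:ℝ)/100) * (Nat.card {x : Fin n → Bool // hWt x = n/2} : ℝ) :=
          mul_le_mul_of_nonneg_left hSliceLb hrnn
  rw [sub_mul, one_mul]
  linarith
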